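/- (Riesz analytic continuation of a ↦ ∫_0^∞ x^a φ(x) dx.) Let φ ∈ 𝓢(ℝ,ℂ) and k ∈ ℕ, k ≥ 1. Then: (i) for every a ∈ ℂ with Re a > −1, ∫_{x ∈ (0,∞)} x^a φ(x) dx = ((−1)^k / ((a+1)(a+2)⋯(a+k))) · ∫_{x ∈ (0,∞)} x^{a+k} φ^{(k)}(x) dx; (ii) the function G(a) := ((−1)^k / ((a+1)⋯(a+k))) · ∫_{x ∈ (0,∞)} x^{a+k} φ^{(k)}(x) dx is complex-differentiable on {a : Re a > −k−1} \ {−1, −2, …, −k}; (iii) (a + k)·G(a) → φ^{(k-1)}(0)/(k−1)! as a → −k, i.e. G has at most a simple pole at a = −k with residue φ^{(k-1)}(0)/(k−1)!. -/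

import Mathlib

open MeasureTheory Complex Filter Asymptotics Set Real

namespace RieszAux

lemma schwartz_isBigO_atTop (ψ : SchwartzMap ℝ ℂ) (t : ℝ) :
    (fun x : ℝ => ψ x) =O[atTop] (· ^ t) := by
  have h := ψ.isBigO_cocompact_rpow t
  refine (h.mono _root_.atTop_le_cocompact).congr' EventuallyEq.rfl ?_
  filter_upwards [eventually_gt_atTop (0:ℝ)] with x hx
  simp [Real.norm_of_nonneg hx.le]

lemma schwartz_isBigO_nhdsGT (ψ : SchwartzMap ℝ ℂ) :
    (fun x : ℝ => ψ x) =O[nhdsWithin 0 (Set.Ioi 0)] (· ^ (-(0:ℝ))) := by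
  have h : Tendsto (fun x : ℝ => ψ x) (nhdsWithin 0 (Set.Ioi 0)) (nhds (ψ 0)) :=
    (ψ.continuous.tendsto 0).mono_left nhdsWithin_le_nhds
  refine h.isBigO_one ℝ |>.trans_eventuallyEq ?_
  filter_upwards [self_mem_nhdsWithin] with x (hx : (0:ℝ) < x)
  simp [Real.rpow_neg hx.le, Real.rpow_zero]

lemma schwartz_mellinConvergent (ψ : SchwartzMap ℝ ℂ) {s : ℂ} (hs : 0 < s.re) :
    MellinConvergent (fun x : ℝ => ψ x) s :=
  mellinConvergent_of_isBigO_rpow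
    (ψ.continuous.locallyIntegrable.locallyIntegrableOn _)
    (schwartz_isBigO_atTop ψ (-(s.re + 1))) (by linarith)
    (schwartz_isBigO_nhdsGT ψ) hs

lemma schwartz_mellin_differentiableAt (ψ : SchwartzMap ℝ ℂ) {s : ℂ} (hs : 0 < s.re) :
    DifferentiableAt ℂ (mellin (fun x : ℝ => ψ x)) s :=
  mellin_differentiableAt_of_isBigO_rpow
    (ψ.continuous.locallyIntegrable.locallyIntegrableOn _)
    (schwartz_isBigO_atTop ψ (-(s.re + 1))) (by linarith)
    (schwartz_isBigO_nhdsGT ψ) hs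

lemma cpow_isBigO_atTop (s : ℂ) :
    (fun x : ℝ => (x:ℂ) ^ s) =O[atTop] (· ^ s.re) := by
  refine IsBigO.of_bound 1 ?_
  filter_upwards [eventually_gt_atTop (0:ℝ)] with x hx
  rw [one_mul, Complex.norm_cpow_eq_rpow_re_of_pos hx,
    Real.norm_of_nonneg (Real.rpow_nonneg hx.le _)]

lemma cpow_mul_schwartz_tendsto_atTop (ψ : SchwartzMap ℝ ℂ) (s : ℂ) :
    Tendsto (fun x : ℝ => (x:ℂ) ^ s * ψ x) atTop (nhds 0) := by
  have hprod := (cpow_isBigO_atTop s).mul (schwartz_isBigO_atTop ψ (-(s.re + 1)))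
  refine hprod.trans_tendsto ?_
  have h0 : Tendsto (fun x : ℝ => x ^ (-(1:ℝ))) atTop (nhds 0) :=
    tendsto_rpow_neg_atTop one_pos
  refine h0.congr' ?_
  filter_upwards [eventually_gt_atTop (0:ℝ)] with x hx
  rw [← Real.rpow_add hx]
  norm_num

lemma schwartz_tendsto_atTop (ψ : SchwartzMap ℝ ℂ) :
    Tendsto (fun x : ℝ => ψ x) atTop (nhds 0) :=
  (schwartz_isBigO_atTop ψ (-1)).trans_tendsto (tendsto_rpow_neg_atTop one_pos)

lemma cpow_tendsto_zero {s : ℂ} (hs : 0 < s.re) :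
    Tendsto (fun x : ℝ => (x:ℂ) ^ s) (nhdsWithin 0 (Set.Ioi 0)) (nhds 0) := by
  apply squeeze_zero_norm' (a := fun x : ℝ => x ^ s.re)
  · filter_upwards [self_mem_nhdsWithin] with x (hx : (0:ℝ) < x)
    exact le_of_eq (by rw [Complex.norm_cpow_eq_rpow_re_of_pos hx])
  · have : Tendsto (fun x : ℝ => x ^ s.re) (nhdsWithin 0 (Set.Ioi 0)) (nhds ((0:ℝ) ^ s.re)) := by
      apply Tendsto.mono_left _ nhdsWithin_le_nhds
      exact (Real.continuousAt_rpow_const 0 s.re (Or.inr hs.le)).tendsto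
    simpa [Real.zero_rpow hs.ne'] using this

lemma cpow_mul_schwartz_tendsto_zero (ψ : SchwartzMap ℝ ℂ) {s : ℂ} (hs : 0 < s.re) :
    Tendsto (fun x : ℝ => (x:ℂ) ^ s * ψ x) (nhdsWithin 0 (Set.Ioi 0)) (nhds 0) := by
  have := (cpow_tendsto_zero hs).mul
    (((ψ.continuous.tendsto 0).mono_left nhdsWithin_le_nhds) : Tendsto (fun x : ℝ => ψ x) _ _)
  simpa using this

/-- FTC on `(0,∞)` for Schwartz functions. -/
lemma integral_deriv_schwartz (ψ : SchwartzMap ℝ ℂ) :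
    ∫ x in Set.Ioi (0:ℝ), deriv (fun y : ℝ => ψ y) x = -ψ 0 := by
  have h := MeasureTheory.integral_Ioi_of_hasDerivAt_of_tendsto
    (f := fun y : ℝ => ψ y) (f' := fun y : ℝ => deriv (fun y : ℝ => ψ y) y) (a := 0) (m := 0)
    (ψ.continuous.continuousWithinAt)
    (fun x _ => ψ.differentiableAt.hasDerivAt)
    ?_ (schwartz_tendsto_atTop ψ)
  · simpa using h
  · have : Integrable (fun y : ℝ => (SchwartzMap.derivCLM ℝ ℂ ψ) y) volume := SchwartzMap.integrable _
    have heq : (fun y : ℝ => (SchwartzMap.derivCLM ℝ ℂ ψ) y)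
        = fun y : ℝ => deriv (fun y : ℝ => ψ y) y := by
      funext y; exact SchwartzMap.derivCLM_apply ℝ ψ y
    rw [heq] at this
    exact this.integrableOn

lemma schwartz_integrableOn_cpow (ψ : SchwartzMap ℝ ℂ) {s : ℂ} (hs : -1 < s.re) :
    IntegrableOn (fun x : ℝ => (x:ℂ) ^ s * ψ x) (Set.Ioi 0) := by
  have h := schwartz_mellinConvergent ψ (s := s + 1) (by simp; linarith)
  rw [MellinConvergent] at h
  simpa [smul_eq_mul] using h

lemma ibp_step (ψ : SchwartzMap ℝ ℂ) {a : ℂ} (ha : -1 < a.re) :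
    ∫ x in Set.Ioi (0:ℝ), (x:ℂ) ^ a * ψ x
      = (-1 / (a+1)) * ∫ x in Set.Ioi (0:ℝ), (x:ℂ) ^ (a+1) * deriv (fun y : ℝ => ψ y) x := by
  have ha1 : a ≠ -1 := by
    intro h; rw [h] at ha; norm_num at ha
  have ha1' : a + 1 ≠ 0 := by
    intro h; exact ha1 (by linear_combination h)
  have key := MeasureTheory.integral_Ioi_mul_deriv_eq_deriv_mul
    (u := fun y : ℝ => (y:ℂ) ^ (a+1) / (a+1)) (u' := fun y : ℝ => (y:ℂ) ^ a)
    (v := fun y : ℝ => ψ y) (v' := fun y : ℝ => deriv (fun y : ℝ => ψ y) y)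
    (a := 0) (a' := 0) (b' := 0)
    (fun x hx => hasDerivAt_ofReal_cpow_const' (ne_of_gt hx) ha1)
    (fun x _ => ψ.differentiableAt.hasDerivAt)
    ?_ ?_ ?_ ?_
  · rw [show ((0:ℂ) - 0 = 0) by ring] at key
    have key2 : ∫ x in Set.Ioi (0:ℝ), (x:ℂ) ^ a * ψ x
        = - ∫ x in Set.Ioi (0:ℝ), (x:ℂ) ^ (a+1) / (a+1) * deriv (fun y : ℝ => ψ y) x := by
      rw [key]; ring_nf
    rw [key2]
    rw [show (fun x : ℝ => (x:ℂ) ^ (a+1) / (a+1) * deriv (fun y : ℝ => ψ y) x)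
        = fun x : ℝ => ((x:ℂ) ^ (a+1) * deriv (fun y : ℝ => ψ y) x) / (a+1) by
      funext x; ring]
    rw [MeasureTheory.integral_div]
    ring
  · have h := (schwartz_integrableOn_cpow (SchwartzMap.derivCLM ℝ ℂ ψ)
      (s := a + 1) (by simp; linarith)).div_const (a+1)
    simp only [SchwartzMap.derivCLM_apply] at h
    refine MeasureTheory.IntegrableOn.congr_fun h (fun x _ => ?_) measurableSet_Ioi
    simp only [Pi.mul_apply]; ring
  · exact (schwartz_integrableOn_cpow ψ ha).congr_fun
      (fun x _ => by simp [Pi.mul_apply]) measurableSet_Ioi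
  · have h := (cpow_mul_schwartz_tendsto_zero ψ (s := a + 1) (by simp; linarith)).div_const (a+1)
    rw [zero_div] at h
    refine h.congr (fun x => ?_)
    simp only [Pi.mul_apply]; ring
  · have h := (cpow_mul_schwartz_tendsto_atTop ψ (a+1)).div_const (a+1)
    rw [zero_div] at h
    refine h.congr (fun x => ?_)
    simp only [Pi.mul_apply]; ring

lemma riesz_formula : ∀ (k : ℕ) (ψ : SchwartzMap ℝ ℂ) (a : ℂ), -1 < a.re →
    ∫ x in Set.Ioi (0:ℝ), (x:ℂ) ^ a * ψ x
      = ((-1) ^ k / ∏ i ∈ Finset.range k, (a + (i : ℂ) + 1)) *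
        ∫ x in Set.Ioi (0:ℝ), (x:ℂ) ^ (a + k) * iteratedDeriv k (fun y : ℝ => ψ y) x
  | 0, ψ, a, ha => by
    simp [iteratedDeriv_zero]
  | (k+1), ψ, a, ha => by
    have ha1' : a + 1 ≠ 0 := by
      intro h
      have : (a+1).re = 0 := by rw [h]; simp
      simp only [Complex.add_re, Complex.one_re] at this
      linarith
    have IH := riesz_formula k (SchwartzMap.derivCLM ℝ ℂ ψ) (a+1)
      (by simp only [Complex.add_re, Complex.one_re]; linarith)
    simp only [SchwartzMap.derivCLM_apply] at IH
    rw [ibp_step ψ ha, IH]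
    have hexp : a + 1 + (k:ℂ) = a + ((k:ℕ)+1 : ℕ) := by push_cast; ring
    have hint : iteratedDeriv k (fun y : ℝ => deriv (fun y : ℝ => ψ y) y)
        = iteratedDeriv (k+1) (fun y : ℝ => ψ y) := by
      rw [iteratedDeriv_succ']
    rw [hexp, hint]
    have hQ : ∏ i ∈ Finset.range (k+1), (a + (i:ℂ) + 1)
        = (∏ i ∈ Finset.range k, (a + 1 + (i:ℂ) + 1)) * (a + 1) := by
      rw [Finset.prod_range_succ']
      congr 1
      · exact Finset.prod_congr rfl (fun i _ => by push_cast; ring)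
      · push_cast; ring
    rw [hQ]
    have hP : (∏ i ∈ Finset.range k, (a + 1 + (i:ℂ) + 1)) ≠ 0 := by
      rw [Finset.prod_ne_zero_iff]
      intro i _ h
      have h1 : (a + 1 + (i:ℂ) + 1).re = 0 := by rw [h]; simp
      simp only [Complex.add_re, Complex.one_re, Complex.natCast_re] at h1
      have h2 : (0:ℝ) ≤ (i:ℝ) := Nat.cast_nonneg i
      linarith
    rw [← mul_assoc]
    congr 1
    field_simp
    ring

lemma iter_deriv_schwartz (φ : SchwartzMap ℝ ℂ) :
    ∀ k : ℕ, (fun y : ℝ => ((SchwartzMap.derivCLM ℝ ℂ)^[k] φ) y) = iteratedDeriv k (fun y : ℝ => φ y)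
  | 0 => by simp [iteratedDeriv_zero]
  | (k+1) => by
    rw [Function.iterate_succ_apply, iter_deriv_schwartz (SchwartzMap.derivCLM ℝ ℂ φ) k,
      iteratedDeriv_succ']
    simp only [SchwartzMap.derivCLM_apply]

lemma mellin_rep (φ : SchwartzMap ℝ ℂ) (k : ℕ) (w : ℂ) :
    ∫ x in Set.Ioi (0:ℝ), (x:ℂ) ^ (w + k) * iteratedDeriv k (fun y : ℝ => φ y) x
      = mellin (fun x : ℝ => ((SchwartzMap.derivCLM ℝ ℂ)^[k] φ) x) (w + k + 1) := by
  rw [← iter_deriv_schwartz φ k, mellin, show w + (k:ℂ) + 1 - 1 = w + k by ring]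
  simp [smul_eq_mul]

lemma F_differentiableAt (φ : SchwartzMap ℝ ℂ) (k : ℕ) {a : ℂ} (ha : -(k:ℝ) - 1 < a.re) :
    DifferentiableAt ℂ
      (fun w : ℂ => ∫ x in Set.Ioi (0:ℝ), (x:ℂ) ^ (w + k) * iteratedDeriv k (fun y : ℝ => φ y) x)
      a := by
  have h1 : DifferentiableAt ℂ (mellin (fun x : ℝ => ((SchwartzMap.derivCLM ℝ ℂ)^[k] φ) x))
      (a + k + 1) :=
    schwartz_mellin_differentiableAt _
      (by simp only [Complex.add_re, Complex.natCast_re, Complex.one_re]; linarith)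
  have h2 : DifferentiableAt ℂ (fun w : ℂ => w + (k:ℂ) + 1) a := by fun_prop
  have h3 := h1.comp a h2
  simp only [Function.comp_def] at h3
  refine h3.congr_of_eventuallyEq ?_
  filter_upwards with w
  rw [mellin_rep]

end RieszAux

open RieszAux Filter


/-- Riesz analytic continuation of `a ↦ ∫_0^∞ x^a φ(x) dx`: integration by parts formula,
analyticity on `Re a > -k-1` away from `{-1,…,-k}`, and simple pole at `a = -k` with
residue `φ^{(k-1)}(0)/(k-1)!`. -/
theorem riesz_analytic_continuation (φ : SchwartzMap ℝ ℂ) (k : ℕ) (hk : 1 ≤ k) :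
    (∀ a : ℂ, -1 < a.re →
      ∫ x in Set.Ioi (0 : ℝ), (x : ℂ) ^ a * φ x
        = ((-1) ^ k / ∏ i ∈ Finset.range k, (a + (i : ℂ) + 1)) *
          ∫ x in Set.Ioi (0 : ℝ), (x : ℂ) ^ (a + k) * iteratedDeriv k (fun y : ℝ => φ y) x) ∧
    (∀ a : ℂ, -(k : ℝ) - 1 < a.re → (∀ i ∈ Finset.range k, a ≠ -((i : ℂ) + 1)) →
      DifferentiableAt ℂ
        (fun w : ℂ => ((-1) ^ k / ∏ i ∈ Finset.range k, (w + (i : ℂ) + 1)) *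
          ∫ x in Set.Ioi (0 : ℝ), (x : ℂ) ^ (w + k) * iteratedDeriv k (fun y : ℝ => φ y) x)
        a) ∧
    Filter.Tendsto
      (fun w : ℂ => (w + (k : ℂ)) *
        (((-1) ^ k / ∏ i ∈ Finset.range k, (w + (i : ℂ) + 1)) *
          ∫ x in Set.Ioi (0 : ℝ), (x : ℂ) ^ (w + k) * iteratedDeriv k (fun y : ℝ => φ y) x))
      (nhdsWithin (-(k : ℂ)) {-(k : ℂ)}ᶜ)
      (nhds (iteratedDeriv (k - 1) (fun y : ℝ => φ y) 0 / ((k - 1).factorial : ℂ))) := by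
  obtain ⟨m, rfl⟩ : ∃ m, k = m + 1 := ⟨k - 1, (Nat.succ_pred_eq_of_pos hk).symm⟩
  set k := m + 1 with hkdef
  refine ⟨fun a ha => riesz_formula k φ a ha, ?_, ?_⟩
  · -- part (ii)
    intro a ha hroots
    have hPdiff : ∀ n : ℕ, DifferentiableAt ℂ (fun w : ℂ => ∏ i ∈ Finset.range n, (w + (i:ℂ) + 1)) a := by
      intro n
      induction n with
      | zero => simpa using differentiableAt_const (1:ℂ)
      | succ n ih =>
        simp only [Finset.prod_range_succ]
        exact ih.mul (by fun_prop)
    have hne : (∏ i ∈ Finset.range k, (a + (i:ℂ) + 1)) ≠ 0 := by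
      rw [Finset.prod_ne_zero_iff]
      intro i hi h
      exact (hroots i hi) (by linear_combination h)
    exact ((differentiableAt_const ((-1:ℂ)^k)).div (hPdiff k) hne).mul
      (F_differentiableAt φ k ha)
  · -- part (iii)
    set F : ℂ → ℂ := fun w =>
      ∫ x in Set.Ioi (0 : ℝ), (x : ℂ) ^ (w + k) * iteratedDeriv k (fun y : ℝ => φ y) x with hF
    set P : ℂ → ℂ := fun w => ∏ i ∈ Finset.range m, (w + (i:ℂ) + 1) with hPdef
    have hsplit : ∀ w : ℂ, (∏ i ∈ Finset.range k, (w + (i:ℂ) + 1)) = P w * (w + k) := by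
      intro w
      rw [hkdef, Finset.prod_range_succ]
      congr 1
      push_cast; ring
    -- continuity data at -k
    have hPdiff : ∀ n : ℕ, DifferentiableAt ℂ
        (fun w : ℂ => ∏ i ∈ Finset.range n, (w + (i:ℂ) + 1)) (-(k:ℂ)) := by
      intro n
      induction n with
      | zero => simpa using differentiableAt_const (1:ℂ)
      | succ n ih =>
        simp only [Finset.prod_range_succ]
        exact ih.mul (by fun_prop)
    have hPne : P (-(k:ℂ)) ≠ 0 := by
      rw [hPdef, Finset.prod_ne_zero_iff]
      intro i hi h
      have h1 : ((-(k:ℂ)) + (i:ℂ) + 1).re = 0 := by rw [h]; simp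
      simp only [Complex.add_re, Complex.one_re, Complex.natCast_re, Complex.neg_re] at h1
      have h2 : (i:ℝ) < (m:ℝ) := by exact_mod_cast Finset.mem_range.mp hi
      have h3 : ((k:ℕ):ℝ) = (m:ℝ) + 1 := by push_cast [hkdef]; ring
      rw [h3] at h1
      linarith
    have hFcont : ContinuousAt F (-(k:ℂ)) := by
      refine (F_differentiableAt φ k (a := -(k:ℂ)) ?_).continuousAt
      simp only [Complex.neg_re, Complex.natCast_re]
      norm_num
    have hH : Tendsto (fun w : ℂ => (-1:ℂ)^k / P w * F w) (nhds (-(k:ℂ)))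
        (nhds ((-1:ℂ)^k / P (-(k:ℂ)) * F (-(k:ℂ)))) := by
      exact (((continuousAt_const).div (hPdiff m).continuousAt hPne).mul hFcont)
    -- value computations
    have hF0 : F (-(k:ℂ)) = -(((SchwartzMap.derivCLM ℝ ℂ)^[m] φ) 0) := by
      rw [hF]
      have e1 : ∀ x : ℝ, (x:ℂ) ^ ((-(k:ℂ)) + k) * iteratedDeriv k (fun y : ℝ => φ y) x
          = iteratedDeriv k (fun y : ℝ => φ y) x := by
        intro x
        rw [show (-(k:ℂ)) + k = 0 by ring, Complex.cpow_zero, one_mul]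
      simp only [e1]
      have e2 : iteratedDeriv k (fun y : ℝ => φ y)
          = deriv (fun y : ℝ => ((SchwartzMap.derivCLM ℝ ℂ)^[m] φ) y) := by
        rw [hkdef, iteratedDeriv_succ, ← iter_deriv_schwartz φ m]
      rw [e2, integral_deriv_schwartz]
    have hPval : P (-(k:ℂ)) = (-1:ℂ)^m * (m.factorial : ℂ) := by
      simp only [hPdef]
      have e1 : ∀ i ∈ Finset.range m, (-(k:ℂ)) + (i:ℂ) + 1 = (-1) * (((m - i : ℕ)):ℂ) := by
        intro i hi
        have hi' : i ≤ m := (Finset.mem_range.mp hi).le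
        rw [Nat.cast_sub hi']
        push_cast [hkdef]
        ring
      rw [Finset.prod_congr rfl e1, Finset.prod_mul_distrib, Finset.prod_const,
        Finset.card_range]
      congr 1
      rw [← Nat.cast_prod]
      congr 1
      have e2 : ∏ i ∈ Finset.range m, (m - i) = ∏ i ∈ Finset.range m, ((m - 1 - i) + 1) :=
        Finset.prod_congr rfl (fun i hi => by
          have := Finset.mem_range.mp hi; omega)
      rw [e2, Finset.prod_range_reflect (fun j => j + 1) m,
        Finset.prod_range_add_one_eq_factorial]
    -- eventual equality
    have heq : ∀ᶠ w in nhdsWithin (-(k:ℂ)) {-(k:ℂ)}ᶜ,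
        (-1:ℂ)^k / P w * F w
          = (w + (k : ℂ)) *
            (((-1) ^ k / ∏ i ∈ Finset.range k, (w + (i : ℂ) + 1)) * F w) := by
      filter_upwards [self_mem_nhdsWithin] with w hw
      have hwk : w + (k:ℂ) ≠ 0 := by
        intro h
        exact hw (by simpa using (by linear_combination h : w = -(k:ℂ)))
      rw [hsplit w]
      by_cases hPw : P w = 0
      · simp [hPw]
      · field_simp
    have hfinal := (hH.mono_left nhdsWithin_le_nhds).congr' heq
    -- identify the limit value
    have hval : (-1:ℂ)^k / P (-(k:ℂ)) * F (-(k:ℂ))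
        = iteratedDeriv (k - 1) (fun y : ℝ => φ y) 0 / ((k - 1).factorial : ℂ) := by
      rw [hF0, hPval]
      have e3 : iteratedDeriv (k - 1) (fun y : ℝ => φ y) 0 = ((SchwartzMap.derivCLM ℝ ℂ)^[m] φ) 0 := by
        rw [hkdef, Nat.add_sub_cancel, ← iter_deriv_schwartz φ m]
      have e4 : (k - 1 : ℕ) = m := by omega
      rw [e3, e4]
      have hm1 : ((-1:ℂ))^m ≠ 0 := by
        apply pow_ne_zero; norm_num
      have hmf : ((m.factorial : ℕ):ℂ) ≠ 0 := by
        exact_mod_cast Nat.factorial_ne_zero m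
      rw [hkdef]
      field_simp
      ring
    rw [hval] at hfinal
    exact hfinal
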